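/- (Hedge/MW deterministic regret bound) Consider the multiplicative weights algorithm over K actions with learning rate η > 0: weights start uniform, w₁(a) = 1/K, and are updated by w_{t+1}(a) ∝ w_t(a)·exp(−η·(1 − r_t(a))) where r_t : {1,…,K} → [0,1] is the reward vector at round t. Then for any fixed action a*, ∑_{t=1}^T ⟨w_t, r_t⟩ ≥ ∑_{t=1}^T r_t(a*) − (log K)/η − η·T/8, where ⟨w_t, r_t⟩ = ∑_a w_t(a) r_t(a). -/

import Mathlib

open Finset Real

private lemma hoeffding_scalar (p : ℝ) (hp0 : 0 ≤ p) (hp1 : p ≤ 1) {s : ℝ} (hs : s ≤ 0) :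
    Real.log (1 - p + p * Real.exp s) ≤ p * s + s ^ 2 / 8 := by
  set D : ℝ → ℝ := fun x => 1 - p + p * Real.exp x with hD
  have hDpos : ∀ x, 0 < D x := by
    intro x
    rcases eq_or_lt_of_le hp1 with h | h
    · simp only [hD, h]; simpa using Real.exp_pos x
    · have : 0 ≤ p * Real.exp x := mul_nonneg hp0 (Real.exp_pos x).le
      simp only [hD]; linarith
  have hDderiv : ∀ x, HasDerivAt D (p * Real.exp x) x := by
    intro x
    exact ((Real.hasDerivAt_exp x).const_mul p).const_add (1 - p)
  set g : ℝ → ℝ := fun x => p * Real.exp x / D x - p - x / 4 with hg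
  have hgderiv : ∀ x, HasDerivAt g
      ((p * Real.exp x * D x - p * Real.exp x * (p * Real.exp x)) / (D x) ^ 2 - 1 / 4) x := by
    intro x
    have h1 : HasDerivAt (fun x => p * Real.exp x / D x)
        ((p * Real.exp x * D x - p * Real.exp x * (p * Real.exp x)) / (D x) ^ 2) x :=
      ((Real.hasDerivAt_exp x).const_mul p).div (hDderiv x) (hDpos x).ne'
    have h2 : HasDerivAt (fun x : ℝ => x / 4) (1 / 4) x := by
      simpa using (hasDerivAt_id x).div_const 4
    exact (h1.sub_const p).sub h2
  have hgderiv_nonpos : ∀ x,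
      (p * Real.exp x * D x - p * Real.exp x * (p * Real.exp x)) / (D x) ^ 2 - 1 / 4 ≤ 0 := by
    intro x
    have hd := hDpos x
    revert hd
    generalize D x = d
    intro hd
    rw [sub_nonpos, div_le_iff₀ (pow_pos hd 2)]
    nlinarith [sq_nonneg (d - 2 * (p * Real.exp x))]
  have hganti : Antitone g := by
    intro a b hab
    have := antitoneOn_of_deriv_nonpos (convex_univ) (Continuous.continuousOn (by
        fun_prop (disch := intro x; exact (hDpos x).ne')))
      (fun x _ => ((hgderiv x).differentiableAt).differentiableWithinAt)
      (fun x _ => by rw [(hgderiv x).deriv]; exact hgderiv_nonpos x)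
    exact this (Set.mem_univ a) (Set.mem_univ b) hab
  have hg0 : g 0 = 0 := by simp [hg, hD]
  have hgnonneg : ∀ x ≤ (0:ℝ), 0 ≤ g x := fun x hx => hg0 ▸ hganti hx
  set f : ℝ → ℝ := fun x => Real.log (D x) - p * x - x ^ 2 / 8 with hf
  have hfderiv : ∀ x, HasDerivAt f (g x) x := by
    intro x
    have h1 : HasDerivAt (fun x => Real.log (D x)) (p * Real.exp x / D x) x :=
      (hDderiv x).log (hDpos x).ne'
    have h2 : HasDerivAt (fun x : ℝ => p * x) p x := by
      simpa using (hasDerivAt_id x).const_mul p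
    have h3 : HasDerivAt (fun x : ℝ => x ^ 2 / 8) (x / 4) x := by
      have := (hasDerivAt_pow 2 x).div_const 8
      refine this.congr_deriv ?_; ring
    exact (h1.sub h2).sub h3
  have hfmono : MonotoneOn f (Set.Iic 0) := by
    apply monotoneOn_of_deriv_nonneg (convex_Iic 0)
    · exact Continuous.continuousOn (by
        fun_prop (disch := intro x; exact (hDpos x).ne'))
    · exact fun x _ => ((hfderiv x).differentiableAt).differentiableWithinAt
    · intro x hx
      rw [(hfderiv x).deriv]
      exact hgnonneg x (le_of_lt (by simpa using hx))
  have hf0 : f 0 = 0 := by simp [hf, hD]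
  have := hfmono (Set.mem_Iic.2 hs) (Set.mem_Iic.2 le_rfl) hs
  rw [hf0] at this
  simp only [hf] at this
  linarith

private lemma hoeffding_sum {K : ℕ} (p : Fin K → ℝ) (x : Fin K → ℝ)
    (hp : ∀ a, 0 ≤ p a) (hp1 : ∑ a, p a = 1) (hx : ∀ a, x a ∈ Set.Icc (0:ℝ) 1)
    {s : ℝ} (hs : s ≤ 0) :
    Real.log (∑ a, p a * Real.exp (s * x a)) ≤ s * (∑ a, p a * x a) + s ^ 2 / 8 := by
  set μ := ∑ a, p a * x a with hμ
  have hμ0 : 0 ≤ μ := sum_nonneg fun a _ => mul_nonneg (hp a) (hx a).1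
  have hμ1 : μ ≤ 1 := by
    rw [hμ, ← hp1]
    exact sum_le_sum fun a _ => by nlinarith [(hx a).1, (hx a).2, hp a]
  have hconv : ∀ i, Real.exp (s * x i) ≤ 1 - x i + x i * Real.exp s := by
    intro i
    have h : Real.exp ((1 - x i) • (0:ℝ) + (x i) • s) ≤
        (1 - x i) • Real.exp 0 + (x i) • Real.exp s :=
      convexOn_exp.2 (Set.mem_univ (0:ℝ)) (Set.mem_univ s)
        (by linarith [(hx i).2]) (hx i).1 (by ring)
    simp only [smul_eq_mul, mul_zero, zero_add, Real.exp_zero, mul_one] at h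
    have h' : s * x i = x i * s := mul_comm _ _
    rw [h']; linarith
  have hsum : ∑ a, p a * Real.exp (s * x a) ≤ 1 - μ + μ * Real.exp s := by
    calc ∑ a, p a * Real.exp (s * x a)
        ≤ ∑ a, p a * (1 - x a + x a * Real.exp s) :=
          sum_le_sum fun a _ => mul_le_mul_of_nonneg_left (hconv a) (hp a)
      _ = 1 - μ + μ * Real.exp s := by
          simp only [mul_sub, mul_one, mul_add, sum_add_distrib, sum_sub_distrib, hp1,
            ← mul_assoc, ← sum_mul, ← hμ]
  have hpos : 0 < ∑ a, p a * Real.exp (s * x a) := by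
    have h1 : ∀ a ∈ univ, p a * Real.exp s ≤ p a * Real.exp (s * x a) := fun a _ =>
      mul_le_mul_of_nonneg_left (Real.exp_le_exp.2 (by nlinarith [(hx a).2])) (hp a)
    have h2 : Real.exp s ≤ ∑ a, p a * Real.exp (s * x a) := by
      calc Real.exp s = ∑ a, p a * Real.exp s := by rw [← sum_mul, hp1, one_mul]
        _ ≤ _ := sum_le_sum h1
    linarith [Real.exp_pos s]
  calc Real.log (∑ a, p a * Real.exp (s * x a))
      ≤ Real.log (1 - μ + μ * Real.exp s) := Real.log_le_log hpos hsum
    _ ≤ μ * s + s ^ 2 / 8 := hoeffding_scalar μ hμ0 hμ1 hs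
    _ = s * μ + s ^ 2 / 8 := by ring

private noncomputable def mwW (K : ℕ) (η : ℝ) (r : ℕ → Fin K → ℝ) (t : ℕ) (a : Fin K) : ℝ :=
  (1 / K : ℝ) * Real.exp (-η * ∑ i ∈ Finset.range t, (1 - r i a))

private noncomputable def mwZ (K : ℕ) (η : ℝ) (r : ℕ → Fin K → ℝ) (t : ℕ) : ℝ :=
  ∑ a, mwW K η r t a

private lemma mwW_pos {K : ℕ} (hK : 1 ≤ K) (η : ℝ) (r : ℕ → Fin K → ℝ) (t : ℕ) (a : Fin K) :
    0 < mwW K η r t a := by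
  have hKpos : (0:ℝ) < K := by exact_mod_cast hK
  unfold mwW
  positivity

private lemma mwZ_pos {K : ℕ} (hK : 1 ≤ K) (η : ℝ) (r : ℕ → Fin K → ℝ) (t : ℕ) :
    0 < mwZ K η r t := by
  have : Nonempty (Fin K) := ⟨⟨0, hK⟩⟩
  exact Finset.sum_pos (fun a _ => mwW_pos hK η r t a) Finset.univ_nonempty

private lemma mwW_succ {K : ℕ} (η : ℝ) (r : ℕ → Fin K → ℝ) (t : ℕ) (a : Fin K) :
    mwW K η r (t+1) a = mwW K η r t a * Real.exp (-η * (1 - r t a)) := by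
  unfold mwW
  rw [Finset.sum_range_succ, mul_add, Real.exp_add]
  ring

private lemma mwZ_succ {K : ℕ} (η : ℝ) (r : ℕ → Fin K → ℝ) (t : ℕ) :
    mwZ K η r (t+1) = ∑ a, mwW K η r t a * Real.exp (-η * (1 - r t a)) := by
  unfold mwZ
  exact Finset.sum_congr rfl fun a _ => mwW_succ η r t a

/-- Deterministic regret bound for the multiplicative weights (Hedge) algorithm with
rewards in `[0,1]`: starting from uniform weights and updating
`w_{t+1}(a) ∝ w_t(a)·exp(−η(1 − r_t(a)))`, for any fixed action `a*`,
`∑_t ⟨w_t, r_t⟩ ≥ ∑_t r_t(a*) − (log K)/η − ηT/8`. -/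
theorem stmt_5 (K T : ℕ) (hK : 1 ≤ K) (hT : 1 ≤ T) (η : ℝ) (hη : 0 < η)
    (r : ℕ → Fin K → ℝ) (hr : ∀ t a, r t a ∈ Set.Icc (0 : ℝ) 1)
    (w : ℕ → Fin K → ℝ)
    (hw0 : ∀ a, w 0 a = 1 / K)
    (hwrec : ∀ t a, w (t + 1) a =
      w t a * Real.exp (-η * (1 - r t a)) /
        ∑ k, w t k * Real.exp (-η * (1 - r t k)))
    (astar : Fin K) :
    ∑ t ∈ Finset.range T, r t astar - Real.log K / η - η * T / 8 ≤
      ∑ t ∈ Finset.range T, ∑ a, w t a * r t a := by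
  have hKpos : (0:ℝ) < K := by exact_mod_cast hK
  have hZpos := fun t => mwZ_pos hK η r t
  have hZ0 : mwZ K η r 0 = 1 := by
    unfold mwZ mwW
    simp [Finset.card_univ]
    field_simp
  -- weights formula
  have hwA : ∀ t a, w t a = mwW K η r t a / mwZ K η r t := by
    intro t
    induction t with
    | zero =>
      intro a
      rw [hw0, hZ0]
      unfold mwW
      simp
    | succ t ih =>
      intro a
      have hden : ∑ k, w t k * Real.exp (-η * (1 - r t k)) = mwZ K η r (t+1) / mwZ K η r t := by
        rw [mwZ_succ, Finset.sum_div]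
        exact Finset.sum_congr rfl fun k _ => by rw [ih k]; ring
      rw [hwrec t a, hden, ih a, mwW_succ]
      have h1 := (hZpos t).ne'
      have h2 := (hZpos (t+1)).ne'
      field_simp
  have hwnn : ∀ t a, 0 ≤ w t a := fun t a => by
    rw [hwA t a]; exact le_of_lt (div_pos (mwW_pos hK η r t a) (hZpos t))
  have hwsum : ∀ t, ∑ a, w t a = 1 := by
    intro t
    have : ∀ a ∈ univ, w t a = mwW K η r t a / mwZ K η r t := fun a _ => hwA t a
    rw [Finset.sum_congr rfl this, ← Finset.sum_div]
    exact div_self (hZpos t).ne'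
  -- one-step inequality
  have hstep : ∀ t, Real.log (mwZ K η r (t+1)) ≤
      Real.log (mwZ K η r t) + (-η * ∑ a, w t a * (1 - r t a) + η ^ 2 / 8) := by
    intro t
    have hden : ∑ k, w t k * Real.exp (-η * (1 - r t k)) = mwZ K η r (t+1) / mwZ K η r t := by
      rw [mwZ_succ, Finset.sum_div]
      exact Finset.sum_congr rfl fun k _ => by rw [hwA t k]; ring
    have hx : ∀ a, (1 - r t a) ∈ Set.Icc (0:ℝ) 1 :=
      fun a => ⟨by linarith [(hr t a).2], by linarith [(hr t a).1]⟩
    have key := hoeffding_sum (fun a => w t a) (fun a => 1 - r t a)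
      (fun a => hwnn t a) (hwsum t) hx (s := -η) (by linarith)
    simp only [neg_sq] at key
    rw [hden] at key
    rw [Real.log_div (hZpos (t+1)).ne' (hZpos t).ne'] at key
    linarith
  -- telescoping
  have htel : Real.log (mwZ K η r T) - Real.log (mwZ K η r 0) ≤
      ∑ t ∈ Finset.range T, (-η * ∑ a, w t a * (1 - r t a) + η ^ 2 / 8) := by
    rw [← Finset.sum_range_sub (fun t => Real.log (mwZ K η r t)) T]
    exact Finset.sum_le_sum fun t _ => by linarith [hstep t]
  -- lower bound via astar
  have hlow : -Real.log K + -η * ∑ t ∈ Finset.range T, (1 - r t astar) ≤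
      Real.log (mwZ K η r T) := by
    have h1 : mwW K η r T astar ≤ mwZ K η r T :=
      Finset.single_le_sum (fun a _ => (mwW_pos hK η r T a).le) (Finset.mem_univ astar)
    have h2 := Real.log_le_log (mwW_pos hK η r T astar) h1
    unfold mwW at h2
    rw [Real.log_mul (by positivity) (Real.exp_ne_zero _), Real.log_exp, one_div,
      Real.log_inv] at h2
    exact h2
  -- algebraic combination
  set A := ∑ t ∈ Finset.range T, r t astar with hA
  set B := ∑ t ∈ Finset.range T, ∑ a, w t a * r t a with hB
  have hSast : ∑ t ∈ Finset.range T, (1 - r t astar) = (T:ℝ) - A := by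
    rw [Finset.sum_sub_distrib, Finset.sum_const, Finset.card_range, nsmul_eq_mul, mul_one, hA]
  have hinner : ∀ t, ∑ a, w t a * (1 - r t a) = 1 - ∑ a, w t a * r t a := by
    intro t
    simp only [mul_sub, mul_one, Finset.sum_sub_distrib, hwsum t]
  have hRHS : ∑ t ∈ Finset.range T, (-η * ∑ a, w t a * (1 - r t a) + η ^ 2 / 8)
      = -η * ((T:ℝ) - B) + (T:ℝ) * (η ^ 2 / 8) := by
    rw [Finset.sum_add_distrib, Finset.sum_const, Finset.card_range, nsmul_eq_mul]
    congr 1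
    rw [← Finset.mul_sum]
    congr 1
    rw [Finset.sum_congr rfl fun t _ => hinner t, Finset.sum_sub_distrib, Finset.sum_const,
      Finset.card_range, nsmul_eq_mul, mul_one, hB]
  rw [hZ0, Real.log_one, sub_zero, hRHS] at htel
  rw [hSast] at hlow
  have hmain : η * A - Real.log K - (T:ℝ) * η ^ 2 / 8 ≤ η * B := by nlinarith [htel, hlow]
  have final : η * (A - Real.log K / η - η * T / 8) ≤ η * B := by
    have hc : η * (Real.log K / η) = Real.log K := mul_div_cancel₀ _ hη.ne'
    calc η * (A - Real.log K / η - η * T / 8)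
        = η * A - η * (Real.log K / η) - (T:ℝ) * η ^ 2 / 8 := by ring
      _ = η * A - Real.log K - (T:ℝ) * η ^ 2 / 8 := by rw [hc]
      _ ≤ η * B := hmain
  exact le_of_mul_le_mul_left final hη
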